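/- In the extended affine Weyl group W̃ of type A₂ with twisting automorphism δ of order 2 (induced by the nontrivial diagram automorphism, δ(s₁) = s₂, δ(s₂) = s₁, δ(s₀) = s₀), the set 𝕆_{0,δ} consisting of all elements δ-conjugate to the identity contains, within W_a, exactly the elements {t^{k(α₁+2α₂)}s₂s₁, t^{k(2α₁+α₂)}s₁s₂, t^{k(α₁−α₂)} : k ∈ ℤ}; in particular every element of this set can be reduced to the identity by length-decreasing δ-conjugation steps. -/

import Mathlib

namespace A2

/-- Bundled data for the extended affine Weyl group `W̃ = P ⋊ W` of type `A₂` (for `PGL₃`),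
presented as `W̃ = W_a ⋊ Ω` with simple reflections `s0, s1, s2`, length-zero element `tau`
generating `Ω ≅ ℤ/3`, translations `t (m, n) = t^(m α₁ + n α₂)` for coroot-lattice elements,
and the Iwahori–Matsumoto length function `len`. -/
class A2Data (G : Type*) [Group G] where
  s0 : G
  s1 : G
  s2 : G
  tau : G
  t : ℤ × ℤ → G
  len : G → ℕ
  s0_sq : s0 * s0 = 1
  s1_sq : s1 * s1 = 1
  s2_sq : s2 * s2 = 1
  braid01 : (s0 * s1) ^ 3 = 1
  braid12 : (s1 * s2) ^ 3 = 1
  braid02 : (s0 * s2) ^ 3 = 1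
  tau_cube : tau ^ 3 = 1
  tau_s0 : tau * s0 * tau⁻¹ = s1
  tau_s1 : tau * s1 * tau⁻¹ = s2
  tau_s2 : tau * s2 * tau⁻¹ = s0
  t_add : ∀ a b : ℤ × ℤ, t (a + b) = t a * t b
  s1_t : ∀ m n : ℤ, s1 * t (m, n) * s1⁻¹ = t (n - m, n)
  s2_t : ∀ m n : ℤ, s2 * t (m, n) * s2⁻¹ = t (m, m - n)
  tau_t : ∀ m n : ℤ, tau * t (m, n) * tau⁻¹ = t (-n, m - n)
  s0_def : s0 = t (1, 1) * (s1 * s2 * s1)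
  decomp : ∀ g : G, ∃ (m n : ℤ) (w : G) (j : Fin 3),
    w ∈ ({1, s1, s2, s1 * s2, s2 * s1, s1 * s2 * s1} : Set G) ∧
    g = t (m, n) * w * tau ^ (j : ℕ)
  len_t : ∀ m n : ℤ,
    len (t (m, n)) = (2*m - n).natAbs + (2*n - m).natAbs + (m + n).natAbs
  len_t_s1 : ∀ m n : ℤ,
    len (t (m, n) * s1) = (2*m - n - 1).natAbs + (2*n - m).natAbs + (m + n).natAbs
  len_t_s2 : ∀ m n : ℤ,
    len (t (m, n) * s2) = (2*m - n).natAbs + (2*n - m - 1).natAbs + (m + n).natAbs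
  len_t_s1s2 : ∀ m n : ℤ,
    len (t (m, n) * (s1 * s2)) =
      (2*m - n - 1).natAbs + (2*n - m).natAbs + (m + n - 1).natAbs
  len_t_s2s1 : ∀ m n : ℤ,
    len (t (m, n) * (s2 * s1)) =
      (2*m - n).natAbs + (2*n - m - 1).natAbs + (m + n - 1).natAbs
  len_t_s1s2s1 : ∀ m n : ℤ,
    len (t (m, n) * (s1 * s2 * s1)) =
      (2*m - n - 1).natAbs + (2*n - m - 1).natAbs + (m + n - 1).natAbs
  len_mul_tau : ∀ g : G, len (g * tau) = len g
  len_tau_mul : ∀ g : G, len (tau * g) = len g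

namespace A2Data

variable {G : Type*} [Group G] [A2Data G]

/-- The affine Weyl group `W_a`, the subgroup generated by the simple reflections. -/
def Wa (G : Type*) [Group G] [A2Data G] : Subgroup G :=
  Subgroup.closure {s0, s1, s2}

/-- `y` is `W̃`-conjugate to `x`. -/
def ConjTo (x y : G) : Prop := ∃ g : G, g * x * g⁻¹ = y

/-- The `W̃`-conjugacy class of `x`. -/
def conjClass (x : G) : Set G := {y | ConjTo x y}

def IsConjClass (S : Set G) : Prop := ∃ x : G, S = conjClass x

/-- `n` is the minimal length of an element of `S`, attained on `S`. -/
def IsMinLen (S : Set G) (n : ℕ) : Prop :=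
  (∃ x ∈ S, len x = n) ∧ ∀ x ∈ S, n ≤ len x

/-- The set of simple affine reflections. -/
def simples (G : Type*) [Group G] [A2Data G] : Set G := {s0, s1, s2}

/-- The class `𝕆₁ = {t^{kα₁}s₁, t^{kα₂}s₂, t^{k(α₁+α₂)}s₁s₂s₁ : k ∈ ℤ}`. -/
def O1set (G : Type*) [Group G] [A2Data G] : Set G :=
  {x | ∃ k : ℤ, x = t (k, 0) * s1 ∨ x = t (0, k) * s2 ∨ x = t (k, k) * (s1 * s2 * s1)}

/-- The class `𝕆₂ = {t^λ s₁s₂, t^λ s₂s₁ : λ ∈ Q}`. -/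
def O2set (G : Type*) [Group G] [A2Data G] : Set G :=
  {x | ∃ m n : ℤ, x = t (m, n) * (s1 * s2) ∨ x = t (m, n) * (s2 * s1)}

/-- `C_i = {t^{kα₁+iα₂}s₁, t^{-iα₁+kα₂}s₂, t^{kα₁+(k-i)α₂}s₁s₂s₁ : k ∈ ℤ}`. -/
def Ciset (G : Type*) [Group G] [A2Data G] (i : ℤ) : Set G :=
  {x | ∃ k : ℤ, x = t (k, i) * s1 ∨ x = t (-i, k) * s2 ∨ x = t (k, k - i) * (s1 * s2 * s1)}

/-- `C'_i = {t^{kα₁-iα₂}s₁, t^{iα₁+kα₂}s₂, t^{(k-i)α₁+kα₂}s₁s₂s₁ : k ∈ ℤ}`. -/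
def Ci'set (G : Type*) [Group G] [A2Data G] (i : ℤ) : Set G :=
  {x | ∃ k : ℤ, x = t (k, -i) * s1 ∨ x = t (i, k) * s2 ∨ x = t (k - i, k) * (s1 * s2 * s1)}

/-- `𝕆_{id,τ} = {t^{mα₁+nα₂}τ, t^{mα₁+nα₂}s₁s₂τ : m, n ∈ ℤ}`. -/
def OIdtau (G : Type*) [Group G] [A2Data G] : Set G :=
  {x | ∃ m n : ℤ, x = t (m, n) * tau ∨ x = t (m, n) * (s1 * s2) * tau}

/-- `𝕆_{i,τ} = {t^{kα₁+iα₂}s₁s₂s₁τ, t^{(k+i-1)α₁+kα₂}s₂τ, t^{(1-i)α₁+kα₂}s₁τ : k ∈ ℤ}`. -/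
def Oitau (G : Type*) [Group G] [A2Data G] (i : ℤ) : Set G :=
  {x | ∃ k : ℤ, x = t (k, i) * (s1 * s2 * s1) * tau ∨ x = t (k + i - 1, k) * s2 * tau ∨
    x = t (1 - i, k) * s1 * tau}

/-- One non-length-increasing conjugation step by a simple reflection. -/
def StepTo (x y : G) : Prop :=
  ∃ s ∈ simples G, y = s * x * s ∧ len y ≤ len x

def RedTo : G → G → Prop := Relation.ReflTransGen StepTo

/-- The relation `≈` of the He–Nie reduction method. -/
def Approx (x y : G) : Prop := RedTo x y ∧ RedTo y x

/-- `f` satisfies the defining reduction recursion for the class polynomials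
`f_{w̃,𝕆}`, written as polynomials in the variable `X = v - v⁻¹`. -/
def ClassPolySystem (f : G → Set G → Polynomial ℤ) : Prop :=
  (∀ x : G, (∀ y : G, ConjTo x y → len x ≤ len y) →
    ∀ O : Set G, IsConjClass O → (x ∈ O → f x O = 1) ∧ (x ∉ O → f x O = 0)) ∧
  (∀ x x1 s : G, (∃ y : G, ConjTo x y ∧ len y < len x) →
    Approx x x1 → s ∈ simples G → len (s * x1 * s) < len x1 → len x1 = len x →
    ∀ O : Set G, f x O = Polynomial.X * f (s * x1) O + f (s * x1 * s) O)

/-- `y` is `δ`-conjugate to `x`. -/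
def DConjTo (δ : G ≃* G) (x y : G) : Prop := ∃ g : G, g * x * (δ g)⁻¹ = y

def dConjClass (δ : G ≃* G) (x : G) : Set G := {y | DConjTo δ x y}

def IsDConjClass (δ : G ≃* G) (S : Set G) : Prop := ∃ x : G, S = dConjClass δ x

def DStepTo (δ : G ≃* G) (x y : G) : Prop :=
  ∃ s ∈ simples G, y = s * x * (δ s)⁻¹ ∧ len y ≤ len x

def DRedTo (δ : G ≃* G) : G → G → Prop := Relation.ReflTransGen (DStepTo δ)

def DApprox (δ : G ≃* G) (x y : G) : Prop := DRedTo δ x y ∧ DRedTo δ y x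

/-- `f` satisfies the `δ`-twisted reduction recursion for the class polynomials
`f_{w̃,𝕆}`, written as polynomials in `X = v - v⁻¹`. -/
def DClassPolySystem (δ : G ≃* G) (f : G → Set G → Polynomial ℤ) : Prop :=
  (∀ x : G, (∀ y : G, DConjTo δ x y → len x ≤ len y) →
    ∀ O : Set G, IsDConjClass δ O → (x ∈ O → f x O = 1) ∧ (x ∉ O → f x O = 0)) ∧
  (∀ x x1 s : G, (∃ y : G, DConjTo δ x y ∧ len y < len x) →
    DApprox δ x x1 → s ∈ simples G → len (s * x1 * (δ s)⁻¹) < len x1 → len x1 = len x →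
    ∀ O : Set G, f x O = Polynomial.X * f (s * x1) O + f (s * x1 * (δ s)⁻¹) O)

/-- The diagram automorphism `δ` of `W̃` of type `A₂`: it fixes `s0`, swaps `s1` and
`s2`, inverts `tau`, swaps the coroot coordinates, and preserves lengths. -/
def IsDiagramAut (δ : G ≃* G) : Prop :=
  δ s0 = s0 ∧ δ s1 = s2 ∧ δ s2 = s1 ∧ δ tau = tau⁻¹ ∧
  (∀ m n : ℤ, δ (t (m, n)) = t (n, m)) ∧ ∀ g : G, len (δ g) = len g

/-- Elementary strong conjugation. -/
def ElemStrongConj (x y : G) : Prop :=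
  len x = len y ∧ ∃ g : G, y = g * x * g⁻¹ ∧
    (len (g * x) = len g + len x ∨ len (x * g⁻¹) = len g + len x)

/-- Strong conjugation: a chain of elementary strong conjugations. -/
def StrongConj : G → G → Prop := Relation.ReflTransGen ElemStrongConj

end A2Data

open A2Data

/-- The affine Hecke algebra attached to `W̃`, over `A = ℤ[v, v⁻¹]`, with standard
basis `T` and the quadratic and braid-type multiplication relations. -/
class HeckeData (G : Type*) [Group G] [A2Data G] (H : Type*) [Ring H]
    [Algebra (LaurentPolynomial ℤ) H] where
  T : G → H
  T_one : T 1 = 1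
  T_mul : ∀ x y : G, len (x * y) = len x + len y → T x * T y = T (x * y)
  T_quad : ∀ s ∈ simples G,
    (T s - algebraMap (LaurentPolynomial ℤ) H (LaurentPolynomial.T 1)) *
      (T s + algebraMap (LaurentPolynomial ℤ) H (LaurentPolynomial.T (-1))) = 0

/-- The commutator `ℤ[v,v⁻¹]`-submodule `[H̃, H̃]`. -/
noncomputable def commSub (H : Type*) [Ring H] [Algebra (LaurentPolynomial ℤ) H] :
    Submodule (LaurentPolynomial ℤ) H :=
  Submodule.span (LaurentPolynomial ℤ) {z : H | ∃ a b : H, z = a * b - b * a}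

/-- The `δ`-twisted commutator `ℤ[v,v⁻¹]`-submodule `[H̃, H̃]_δ`. -/
noncomputable def dCommSub {H : Type*} [Ring H] [Algebra (LaurentPolynomial ℤ) H]
    (δH : H →ₐ[LaurentPolynomial ℤ] H) : Submodule (LaurentPolynomial ℤ) H :=
  Submodule.span (LaurentPolynomial ℤ) {z : H | ∃ a b : H, z = a * b - b * (δH a)}

end A2

namespace A2
namespace A2Data

variable {G : Type*} [Group G] [A2Data G]

lemma t_mul (a b : ℤ × ℤ) : (t a : G) * t b = t (a.1 + b.1, a.2 + b.2) := by
  rw [← t_add]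
  rfl

lemma t_zero : (t (0, 0) : G) = 1 := by
  have h : (t (0, 0) : G) * t (0, 0) = t (0, 0) := by rw [t_mul]; norm_num
  exact (mul_eq_left.mp h)

lemma t_zero' : (t 0 : G) = 1 := by
  rw [show (0 : ℤ × ℤ) = ((0:ℤ), (0:ℤ)) from rfl, t_zero]

lemma t_inv (a : ℤ × ℤ) : (t a : G)⁻¹ = t (-a.1, -a.2) := by
  apply inv_eq_of_mul_eq_one_left
  rw [t_mul]; simpa using t_zero

lemma s1_inv : (s1 : G)⁻¹ = s1 := inv_eq_of_mul_eq_one_right s1_sq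
lemma s2_inv : (s2 : G)⁻¹ = s2 := inv_eq_of_mul_eq_one_right s2_sq
lemma s0_inv : (s0 : G)⁻¹ = s0 := inv_eq_of_mul_eq_one_right s0_sq

lemma s1_t' (m n : ℤ) : (s1 : G) * t (m, n) = t (n - m, n) * s1 := by
  have h := s1_t (G := G) m n
  rw [mul_inv_eq_iff_eq_mul] at h; exact h

lemma s2_t' (m n : ℤ) : (s2 : G) * t (m, n) = t (m, m - n) * s2 := by
  have h := s2_t (G := G) m n
  rw [mul_inv_eq_iff_eq_mul] at h; exact h

lemma s1_t_x (m n : ℤ) (x : G) : s1 * (t (m, n) * x) = t (n - m, n) * (s1 * x) := by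
  rw [← mul_assoc, s1_t', mul_assoc]

lemma s2_t_x (m n : ℤ) (x : G) : s2 * (t (m, n) * x) = t (m, m - n) * (s2 * x) := by
  rw [← mul_assoc, s2_t', mul_assoc]

lemma t_t_x (a b : ℤ × ℤ) (x : G) : t a * (t b * x) = t (a.1 + b.1, a.2 + b.2) * x := by
  rw [← mul_assoc, t_mul]

lemma s1s1_x (x : G) : (s1 : G) * (s1 * x) = x := by rw [← mul_assoc, s1_sq, one_mul]
lemma s2s2_x (x : G) : (s2 : G) * (s2 * x) = x := by rw [← mul_assoc, s2_sq, one_mul]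

lemma braidL : (s2 : G) * s1 * s2 = s1 * s2 * s1 := by
  have h := braid12 (G := G)
  rw [pow_succ, pow_succ, pow_one] at h
  have h2 : (s1 : G) * (s2 * (s1 * (s2 * (s1 * s2)))) = 1 := by
    simpa [mul_assoc] using h
  have h3 : (s2 : G) * (s1 * (s2 * (s1 * s2))) = s1 := by
    have := congrArg (fun y => (s1 : G) * y) h2
    simpa [s1s1_x] using this
  have h4 : (s1 : G) * (s2 * (s1 * s2)) = s2 * s1 := by
    have := congrArg (fun y => (s2 : G) * y) h3
    simpa [s2s2_x] using this
  have h5 : (s2 : G) * (s1 * s2) = s1 * (s2 * s1) := by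
    have := congrArg (fun y => (s1 : G) * y) h4
    simpa [s1s1_x, mul_assoc] using this
  simpa [mul_assoc] using h5

lemma braid_x (x : G) : s2 * (s1 * (s2 * x)) = s1 * (s2 * (s1 * x)) := by
  rw [← mul_assoc, ← mul_assoc, braidL, mul_assoc, mul_assoc]

lemma braid' : (s2 : G) * (s1 * s2) = s1 * (s2 * s1) := by
  simpa [mul_assoc] using braidL (G := G)


/-- The finite Weyl group as a set of canonical words. -/
def Wset (G : Type*) [Group G] [A2Data G] : Set G :=
  {1, s1, s2, s1 * s2, s2 * s1, s1 * s2 * s1}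

lemma one_mem_Wset : (1 : G) ∈ Wset G := Or.inl rfl
lemma s1_mem_Wset : (s1 : G) ∈ Wset G := by right; left; rfl
lemma s2_mem_Wset : (s2 : G) ∈ Wset G := by right; right; left; rfl
lemma s1s2_mem_Wset : (s1 * s2 : G) ∈ Wset G := by right; right; right; left; rfl
lemma s2s1_mem_Wset : (s2 * s1 : G) ∈ Wset G := by right; right; right; right; left; rfl
lemma s1s2s1_mem_Wset : (s1 * s2 * s1 : G) ∈ Wset G := by
  right; right; right; right; right; rfl

lemma w_mul_t {w : G} (hw : w ∈ Wset G) (m n : ℤ) :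
    ∃ p q : ℤ, w * t (m, n) = t (p, q) * w := by
  rcases hw with rfl | rfl | rfl | rfl | rfl | rfl
  · exact ⟨m, n, by rw [one_mul, mul_one]⟩
  · exact ⟨n - m, n, s1_t' m n⟩
  · exact ⟨m, m - n, s2_t' m n⟩
  · refine ⟨-n, m - n, ?_⟩
    simp only [mul_assoc, s2_t_x, s2_t', s1_t_x, s1_t']
    ring_nf
  · refine ⟨n - m, -m, ?_⟩
    simp only [mul_assoc, s2_t_x, s2_t', s1_t_x, s1_t']
    ring_nf
  · refine ⟨-n, -m, ?_⟩
    simp only [mul_assoc, s2_t_x, s2_t', s1_t_x, s1_t']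
    ring_nf

lemma Wmul_s1 {w : G} (hw : w ∈ Wset G) : w * s1 ∈ Wset G := by
  rcases hw with rfl | rfl | rfl | rfl | rfl | rfl <;>
    simp [Wset, mul_assoc, s1s1_x, s1_sq, s2s2_x, s2_sq, braid_x, braid']

lemma Wmul_s2 {w : G} (hw : w ∈ Wset G) : w * s2 ∈ Wset G := by
  rcases hw with rfl | rfl | rfl | rfl | rfl | rfl <;>
    simp [Wset, mul_assoc, s1s1_x, s1_sq, s2s2_x, s2_sq, braid_x, braid']

lemma Wmul {w w' : G} (hw : w ∈ Wset G) (hw' : w' ∈ Wset G) : w * w' ∈ Wset G := by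
  rcases hw' with rfl | rfl | rfl | rfl | rfl | rfl
  · simpa using hw
  · exact Wmul_s1 hw
  · exact Wmul_s2 hw
  · rw [← mul_assoc]; exact Wmul_s2 (Wmul_s1 hw)
  · rw [← mul_assoc]; exact Wmul_s1 (Wmul_s2 hw)
  · rw [show w * (s1 * s2 * s1) = w * s1 * s2 * s1 by group]
    exact Wmul_s1 (Wmul_s2 (Wmul_s1 hw))

lemma Winv {w : G} (hw : w ∈ Wset G) : w⁻¹ ∈ Wset G := by
  rcases hw with rfl | rfl | rfl | rfl | rfl | rfl <;>
    simp [Wset, mul_inv_rev, s1_inv, s2_inv, mul_assoc, s1s1_x, s1_sq, s2s2_x, s2_sq,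
      braid_x, braid']

/-- The subgroup of elements of the form `t(m,n) * w`. -/
def K (G : Type*) [Group G] [A2Data G] : Subgroup G where
  carrier := {g | ∃ m n : ℤ, ∃ w, w ∈ Wset G ∧ g = t (m, n) * w}
  one_mem' := ⟨0, 0, 1, one_mem_Wset, by rw [t_zero, one_mul]⟩
  mul_mem' := by
    rintro a b ⟨m, n, w, hw, rfl⟩ ⟨m', n', w', hw', rfl⟩
    obtain ⟨p, q, hpq⟩ := w_mul_t hw m' n'
    refine ⟨m + p, n + q, w * w', Wmul hw hw', ?_⟩
    calc t (m, n) * w * (t (m', n') * w') = t (m, n) * (w * t (m', n')) * w' := by group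
    _ = t (m, n) * (t (p, q) * w) * w' := by rw [hpq]
    _ = t (m, n) * t (p, q) * (w * w') := by group
    _ = t (m + p, n + q) * (w * w') := by rw [t_mul]
  inv_mem' := by
    rintro a ⟨m, n, w, hw, rfl⟩
    obtain ⟨p, q, hpq⟩ := w_mul_t (Winv hw) (-m) (-n)
    refine ⟨p, q, w⁻¹, Winv hw, ?_⟩
    rw [mul_inv_rev, t_inv]
    simpa using hpq

lemma t_mem_K (m n : ℤ) : (t (m, n) : G) ∈ K G :=
  ⟨m, n, 1, one_mem_Wset, (mul_one _).symm⟩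

lemma w_mem_K {w : G} (hw : w ∈ Wset G) : w ∈ K G :=
  ⟨0, 0, w, hw, by rw [t_zero, one_mul]⟩

lemma tw_mem_K (m n : ℤ) {w : G} (hw : w ∈ Wset G) : (t (m, n) : G) * w ∈ K G :=
  ⟨m, n, w, hw, rfl⟩

lemma r_sq : ((s1 : G) * s2 * s1) * (s1 * s2 * s1) = 1 := by
  simp [mul_assoc, s1s1_x, s2s2_x, s1_sq]

lemma t11_eq : (t (1, 1) : G) = s0 * (s1 * s2 * s1) := by
  rw [s0_def, mul_assoc, r_sq, mul_one]

lemma s1_mem_Wa : (s1 : G) ∈ Wa G := Subgroup.subset_closure (by right; left; rfl)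
lemma s2_mem_Wa : (s2 : G) ∈ Wa G := Subgroup.subset_closure (by right; right; rfl)
lemma s0_mem_Wa : (s0 : G) ∈ Wa G := Subgroup.subset_closure (by left; rfl)

lemma t11_mem_Wa : (t (1, 1) : G) ∈ Wa G := by
  rw [t11_eq]
  exact mul_mem s0_mem_Wa (mul_mem (mul_mem s1_mem_Wa s2_mem_Wa) s1_mem_Wa)

lemma t01_mem_Wa : (t (0, 1) : G) ∈ Wa G := by
  have h := s1_t (G := G) 1 1
  norm_num at h
  rw [← h]
  exact mul_mem (mul_mem s1_mem_Wa t11_mem_Wa) (inv_mem s1_mem_Wa)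

lemma t10_mem_Wa : (t (1, 0) : G) ∈ Wa G := by
  have h := s2_t (G := G) 1 1
  norm_num at h
  rw [← h]
  exact mul_mem (mul_mem s2_mem_Wa t11_mem_Wa) (inv_mem s2_mem_Wa)

lemma t_zpow (a : ℤ × ℤ) (k : ℤ) : (t a : G) ^ k = t (k * a.1, k * a.2) := by
  induction k using Int.induction_on with
  | zero =>
      rw [zpow_zero, show ((0:ℤ)*a.1, (0:ℤ)*a.2) = ((0:ℤ),(0:ℤ)) by norm_num, t_zero]
  | succ k ih =>
      rw [zpow_add_one, ih]
      have : (t a : G) = t (a.1, a.2) := by rw [Prod.mk.eta]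
      rw [this, t_mul]
      congr 2 <;> ring
  | pred k ih =>
      rw [zpow_sub_one, ih, t_inv]
      rw [t_mul]
      congr 2 <;> ring

lemma t_mem_Wa (m n : ℤ) : (t (m, n) : G) ∈ Wa G := by
  have h : (t (m, n) : G) = t (1, 0) ^ m * t (0, 1) ^ n := by
    rw [t_zpow, t_zpow, t_mul]
    norm_num
  rw [h]
  exact mul_mem (zpow_mem t10_mem_Wa m) (zpow_mem t01_mem_Wa n)

lemma w_mem_Wa {w : G} (hw : w ∈ Wset G) : w ∈ Wa G := by
  rcases hw with rfl | rfl | rfl | rfl | rfl | rfl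
  · exact one_mem _
  · exact s1_mem_Wa
  · exact s2_mem_Wa
  · exact mul_mem s1_mem_Wa s2_mem_Wa
  · exact mul_mem s2_mem_Wa s1_mem_Wa
  · exact mul_mem (mul_mem s1_mem_Wa s2_mem_Wa) s1_mem_Wa

lemma Wa_eq_K : Wa G = K G := by
  apply le_antisymm
  · rw [Wa, Subgroup.closure_le]
    rintro g (rfl | rfl | rfl)
    · exact ⟨1, 1, s1 * s2 * s1, s1s2s1_mem_Wset, s0_def⟩
    · exact w_mem_K s1_mem_Wset
    · exact w_mem_K s2_mem_Wset
  · rintro g ⟨m, n, w, hw, rfl⟩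
    exact mul_mem (t_mem_Wa m n) (w_mem_Wa hw)


lemma len_one : len (1 : G) = 0 := by
  have h := len_t (G := G) 0 0
  rw [t_zero] at h
  simpa using h

lemma len_tau : len (tau : G) = 0 := by
  have h := len_mul_tau (G := G) 1
  rwa [one_mul, len_one] at h

lemma len_tau_sq : len ((tau : G) * tau) = 0 := by
  have h := len_mul_tau (G := G) tau
  rwa [len_tau] at h

lemma K_len_zero {m n : ℤ} {w : G} (hw : w ∈ Wset G)
    (h : len (t (m, n) * w) = 0) : t (m, n) * w = 1 := by
  rcases hw with rfl | rfl | rfl | rfl | rfl | rfl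
  · rw [mul_one] at h ⊢
    rw [len_t] at h
    have hm : m = 0 ∧ n = 0 := by omega
    rw [hm.1, hm.2, t_zero]
  · rw [len_t_s1] at h; omega
  · rw [len_t_s2] at h; omega
  · rw [len_t_s1s2] at h; omega
  · rw [len_t_s2s1] at h; omega
  · rw [len_t_s1s2s1] at h; omega

lemma tau_ne_one : (tau : G) ≠ 1 := by
  intro h
  have h1 := tau_t (G := G) 1 0
  rw [h, one_mul, inv_one, mul_one] at h1
  norm_num at h1
  have h2 : (t (1, -1) : G) = 1 := by
    have : (t (1, -1) : G) = t (1, 0) * t (0, -1) := by rw [t_mul]; norm_num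
    rw [this, h1, t_mul]
    norm_num
    exact t_zero
  have h3 := len_t (G := G) 1 (-1)
  rw [h2, len_one] at h3
  omega

lemma tau_notin_K : (tau : G) ∉ K G := by
  rintro ⟨m, n, w, hw, h⟩
  have hlen : len (t (m, n) * w : G) = 0 := by rw [← h, len_tau]
  have := K_len_zero hw hlen
  rw [this] at h
  exact tau_ne_one h

lemma tau_sq_notin_K : (tau : G) * tau ∉ K G := by
  rintro ⟨m, n, w, hw, h⟩
  have hlen : len (t (m, n) * w : G) = 0 := by rw [← h, len_tau_sq]
  have h1 := K_len_zero hw hlen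
  rw [h1] at h
  -- h : tau * tau = 1, with tau^3 = 1 get tau = 1
  have h3 := tau_cube (G := G)
  have : (tau : G) = 1 := by
    have : (tau : G) ^ 3 = tau * tau * tau := by rw [pow_succ, pow_two]
    rw [h3] at this
    rw [h] at this
    simpa using this.symm
  exact tau_ne_one this


section Delta

variable (δ : G ≃* G)

lemma dw_mem_Wset (hδ : IsDiagramAut δ) {w : G} (hw : w ∈ Wset G) : δ w ∈ Wset G := by
  obtain ⟨hd0, hd1, hd2, hdτ, hdt, hdlen⟩ := hδ
  rcases hw with rfl | rfl | rfl | rfl | rfl | rfl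
  · rw [map_one]; exact one_mem_Wset
  · rw [hd1]; exact s2_mem_Wset
  · rw [hd2]; exact s1_mem_Wset
  · rw [map_mul, hd1, hd2]; exact s2s1_mem_Wset
  · rw [map_mul, hd2, hd1]; exact s1s2_mem_Wset
  · rw [map_mul, map_mul, hd1, hd2, braidL]; exact s1s2s1_mem_Wset

lemma dconj_one_subset (hδ : IsDiagramAut δ) :
    dConjClass δ (1 : G) ∩ (Wa G : Set G) ⊆
      {x : G | ∃ k : ℤ, x = t (k, 2*k) * (s2 * s1) ∨ x = t (2*k, k) * (s1 * s2) ∨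
        x = t (k, -k)} := by
  obtain ⟨hd0, hd1, hd2, hdτ, hdt, hdlen⟩ := hδ
  rintro y ⟨⟨z, hz⟩, hyWa⟩
  rw [mul_one] at hz
  have hyK : y ∈ K G := by rw [← Wa_eq_K]; exact hyWa
  obtain ⟨m, n, w, j, hw, rfl⟩ := decomp z
  have hδz : δ (t (m, n) * w * tau ^ (j : ℕ)) = t (n, m) * δ w * (tau⁻¹) ^ (j : ℕ) := by
    rw [map_mul, map_mul, map_pow, hdτ, hdt]
  have htneg : (t (-n, -m) : G) = (t (n, m))⁻¹ := by
    rw [t_inv]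
  have key : (tau : G) ^ (j : ℕ) * tau ^ (j : ℕ) =
      (t (m, n) * w)⁻¹ * y * (t (-n, -m))⁻¹ * (δ w) := by
    rw [← hz, hδz, htneg]
    group
  fin_cases j <;> norm_num at key
  · -- j = 0
    have hy : y = t (m, n) * w * (δ w)⁻¹ * t (-n, -m) := by
      have h2 : (t (m, n) : G) * w *
          (w⁻¹ * (t (m, n))⁻¹ * y * (t (-n, -m))⁻¹ * δ w) * (δ w)⁻¹ * t (-n, -m) = y := by
        group
      rw [← key] at h2
      rw [mul_one] at h2
      exact h2.symm
    clear key hz hδz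
    rcases hw with rfl | rfl | rfl | rfl | rfl | rfl
    · refine ⟨m - n, Or.inr (Or.inr ?_)⟩
      rw [hy, map_one, inv_one, mul_one, mul_one, t_mul]
      ring_nf
    · refine ⟨m, Or.inr (Or.inl ?_)⟩
      rw [hy, hd1, s2_inv]
      simp only [mul_assoc, one_mul, mul_one, t_t_x, t_mul, s1_t_x, s1_t', s2_t_x, s2_t',
        s1s1_x, s1_sq, s2s2_x, s2_sq, braid_x, braid']
      ring_nf
    · refine ⟨n, Or.inl ?_⟩
      rw [hy, hd2, s1_inv]
      simp only [mul_assoc, one_mul, mul_one, t_t_x, t_mul, s1_t_x, s1_t', s2_t_x, s2_t',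
        s1s1_x, s1_sq, s2s2_x, s2_sq, braid_x, braid']
      ring_nf
    · refine ⟨n, Or.inl ?_⟩
      rw [hy, map_mul, hd1, hd2, mul_inv_rev, s1_inv, s2_inv]
      simp only [mul_assoc, one_mul, mul_one, t_t_x, t_mul, s1_t_x, s1_t', s2_t_x, s2_t',
        s1s1_x, s1_sq, s2s2_x, s2_sq, braid_x, braid']
      ring_nf
    · refine ⟨m, Or.inr (Or.inl ?_)⟩
      rw [hy, map_mul, hd2, hd1, mul_inv_rev, s1_inv, s2_inv]
      simp only [mul_assoc, one_mul, mul_one, t_t_x, t_mul, s1_t_x, s1_t', s2_t_x, s2_t',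
        s1s1_x, s1_sq, s2s2_x, s2_sq, braid_x, braid']
      ring_nf
    · refine ⟨m - n, Or.inr (Or.inr ?_)⟩
      rw [hy, map_mul, map_mul, hd1, hd2, mul_inv_rev, mul_inv_rev, s1_inv, s2_inv]
      simp only [mul_assoc, one_mul, mul_one, t_t_x, t_mul, s1_t_x, s1_t', s2_t_x, s2_t',
        s1s1_x, s1_sq, s2s2_x, s2_sq, braid_x, braid']
      ring_nf
  · -- j = 1 : contradiction, tau^2 ∈ K
    exfalso
    apply tau_sq_notin_K (G := G)
    rw [key]
    exact mul_mem (mul_mem (mul_mem (mul_mem (inv_mem (w_mem_K hw))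
      (inv_mem (t_mem_K m n))) hyK) (inv_mem (t_mem_K (-n) (-m))))
      (w_mem_K (dw_mem_Wset δ ⟨hd0, hd1, hd2, hdτ, hdt, hdlen⟩ hw))
  · -- j = 2 : contradiction, tau ∈ K
    exfalso
    apply tau_notin_K (G := G)
    have h4 : (tau : G) ^ 2 * tau ^ 2 = tau := by
      rw [← pow_add]
      have : (tau : G) ^ (2 + 2) = tau ^ 3 * tau := by
        rw [show 2 + 2 = 3 + 1 from rfl, pow_succ]
      rw [this, tau_cube, one_mul]
    rw [← h4, key]
    exact mul_mem (mul_mem (mul_mem (mul_mem (inv_mem (w_mem_K hw))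
      (inv_mem (t_mem_K m n))) hyK) (inv_mem (t_mem_K (-n) (-m))))
      (w_mem_K (dw_mem_Wset δ ⟨hd0, hd1, hd2, hdτ, hdt, hdlen⟩ hw))

lemma dconj_one_supset (hδ : IsDiagramAut δ) :
    {x : G | ∃ k : ℤ, x = t (k, 2*k) * (s2 * s1) ∨ x = t (2*k, k) * (s1 * s2) ∨
        x = t (k, -k)} ⊆ dConjClass δ (1 : G) ∩ (Wa G : Set G) := by
  obtain ⟨hd0, hd1, hd2, hdτ, hdt, hdlen⟩ := hδ
  rintro x ⟨k, hx | hx | hx⟩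
  · constructor
    · refine ⟨t (0, k) * (s1 * s2), ?_⟩
      rw [mul_one, hx, map_mul, map_mul, hdt, hd1, hd2]
      simp only [mul_inv_rev, t_inv, s1_inv, s2_inv, mul_assoc, one_mul, mul_one,
        t_t_x, t_mul, s1_t_x, s1_t', s2_t_x, s2_t', s1s1_x, s1_sq, s2s2_x, s2_sq,
        braid_x, braid']
      ring_nf
    · rw [hx, Wa_eq_K]
      exact tw_mem_K k (2*k) s2s1_mem_Wset
  · constructor
    · refine ⟨t (k, 0) * (s2 * s1), ?_⟩
      rw [mul_one, hx, map_mul, map_mul, hdt, hd1, hd2]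
      simp only [mul_inv_rev, t_inv, s1_inv, s2_inv, mul_assoc, one_mul, mul_one,
        t_t_x, t_mul, s1_t_x, s1_t', s2_t_x, s2_t', s1s1_x, s1_sq, s2s2_x, s2_sq,
        braid_x, braid']
      ring_nf
    · rw [hx, Wa_eq_K]
      exact tw_mem_K (2*k) k s1s2_mem_Wset
  · constructor
    · refine ⟨t (k, 0), ?_⟩
      rw [mul_one, hx, hdt, t_inv, t_mul]
      norm_num
    · rw [hx, Wa_eq_K]
      have := tw_mem_K (G := G) k (-k) one_mem_Wset
      rwa [mul_one] at this

lemma red_to_one (hδ : IsDiagramAut δ) : ∀ N : ℕ, ∀ x : G,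
    (∃ k : ℤ, x = t (k, 2*k) * (s2 * s1) ∨ x = t (2*k, k) * (s1 * s2) ∨ x = t (k, -k)) →
    len x = N →
    Relation.ReflTransGen
      (fun a b : G => (∃ s ∈ simples G, b = s * a * (δ s)⁻¹) ∧ len b < len a) x 1 := by
  obtain ⟨hd0, hd1, hd2, hdτ, hdt, hdlen⟩ := hδ
  have hs0m : (s0 : G) ∈ simples G := by left; rfl
  have hs1m : (s1 : G) ∈ simples G := by right; left; rfl
  have hs2m : (s2 : G) ∈ simples G := by right; right; rfl
  intro N
  induction N using Nat.strong_induction_on with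
  | _ N ih =>
    rintro x ⟨k, hx | hx | hx⟩ hlen
    · -- x = t (k, 2k) * (s2 * s1)
      have hL : len x = (2*k - 2*k).natAbs + (2*(2*k) - k - 1).natAbs
          + (k + 2*k - 1).natAbs := by rw [hx]; exact len_t_s2s1 k (2*k)
      rcases lt_trichotomy k 0 with hk | rfl | hk
      · -- k < 0 : step by s2 to t (k, -k)
        have hb : t (k, -k) = s2 * x * (δ s2)⁻¹ := by
          rw [hx, hd2, s1_inv]
          simp only [mul_assoc, one_mul, mul_one, t_t_x, t_mul, s1_t_x, s1_t',
            s2_t_x, s2_t', s1s1_x, s1_sq, s2s2_x, s2_sq, braid_x, braid']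
          ring_nf
        have hlb := len_t (G := G) k (-k)
        have hlt : len (t (k, -k) : G) < len x := by rw [hlb, hL]; omega
        exact Relation.ReflTransGen.head ⟨⟨s2, hs2m, hb⟩, hlt⟩
          (ih _ (by rw [← hlen]; exact hlt) _ ⟨k, Or.inr (Or.inr rfl)⟩ rfl)
      · -- k = 0 : one step to 1
        have hb : (1 : G) = s2 * x * (δ s2)⁻¹ := by
          rw [hx, hd2, s1_inv]
          simp only [mul_assoc, one_mul, mul_one, t_zero, t_t_x, t_mul, s1_t_x, s1_t',
            s2_t_x, s2_t', s1s1_x, s1_sq, s2s2_x, s2_sq, braid_x, braid']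
          norm_num [t_zero, t_zero']
        have hlt : len (1 : G) < len x := by rw [len_one, hL]; omega
        exact Relation.ReflTransGen.single ⟨⟨s2, hs2m, hb⟩, hlt⟩
      · -- k > 0 : step by s0 to t (2(1-k), 1-k) * (s1 * s2)
        have hb : t (2*(1-k), 1-k) * (s1 * s2) = s0 * x * (δ s0)⁻¹ := by
          rw [hx, hd0, s0_inv, s0_def]
          simp only [mul_assoc, one_mul, mul_one, t_t_x, t_mul, s1_t_x, s1_t',
            s2_t_x, s2_t', s1s1_x, s1_sq, s2s2_x, s2_sq, braid_x, braid']
          ring_nf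
        have hlb := len_t_s1s2 (G := G) (2*(1-k)) (1-k)
        have hlt : len (t (2*(1-k), 1-k) * (s1 * s2) : G) < len x := by
          rw [hlb, hL]; omega
        exact Relation.ReflTransGen.head ⟨⟨s0, hs0m, hb⟩, hlt⟩
          (ih _ (by rw [← hlen]; exact hlt) _ ⟨1-k, Or.inr (Or.inl rfl)⟩ rfl)
    · -- x = t (2k, k) * (s1 * s2)
      have hL : len x = (2*(2*k) - k - 1).natAbs + (2*k - 2*k).natAbs
          + (2*k + k - 1).natAbs := by rw [hx]; exact len_t_s1s2 (2*k) k
      rcases lt_trichotomy k 0 with hk | rfl | hk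
      · -- k < 0 : step by s1 to t (-k, -(-k))
        have hb : t (-k, -(-k)) = s1 * x * (δ s1)⁻¹ := by
          rw [hx, hd1, s2_inv]
          simp only [mul_assoc, one_mul, mul_one, t_t_x, t_mul, s1_t_x, s1_t',
            s2_t_x, s2_t', s1s1_x, s1_sq, s2s2_x, s2_sq, braid_x, braid']
          ring_nf
        have hlb := len_t (G := G) (-k) (-(-k))
        have hlt : len (t (-k, -(-k)) : G) < len x := by rw [hlb, hL]; omega
        exact Relation.ReflTransGen.head ⟨⟨s1, hs1m, hb⟩, hlt⟩
          (ih _ (by rw [← hlen]; exact hlt) _ ⟨-k, Or.inr (Or.inr rfl)⟩ rfl)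
      · -- k = 0
        have hb : (1 : G) = s1 * x * (δ s1)⁻¹ := by
          rw [hx, hd1, s2_inv]
          simp only [mul_assoc, one_mul, mul_one, t_zero, t_t_x, t_mul, s1_t_x, s1_t',
            s2_t_x, s2_t', s1s1_x, s1_sq, s2s2_x, s2_sq, braid_x, braid']
          norm_num [t_zero, t_zero']
        have hlt : len (1 : G) < len x := by rw [len_one, hL]; omega
        exact Relation.ReflTransGen.single ⟨⟨s1, hs1m, hb⟩, hlt⟩
      · -- k > 0 : step by s0 to t (1-k, 2*(1-k)) * (s2 * s1)
        have hb : t (1-k, 2*(1-k)) * (s2 * s1) = s0 * x * (δ s0)⁻¹ := by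
          rw [hx, hd0, s0_inv, s0_def]
          simp only [mul_assoc, one_mul, mul_one, t_t_x, t_mul, s1_t_x, s1_t',
            s2_t_x, s2_t', s1s1_x, s1_sq, s2s2_x, s2_sq, braid_x, braid']
          ring_nf
        have hlb := len_t_s2s1 (G := G) (1-k) (2*(1-k))
        have hlt : len (t (1-k, 2*(1-k)) * (s2 * s1) : G) < len x := by
          rw [hlb, hL]; omega
        exact Relation.ReflTransGen.head ⟨⟨s0, hs0m, hb⟩, hlt⟩
          (ih _ (by rw [← hlen]; exact hlt) _ ⟨1-k, Or.inl rfl⟩ rfl)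
    · -- x = t (k, -k)
      have hL : len x = (2*k - (-k)).natAbs + (2*(-k) - k).natAbs
          + (k + (-k)).natAbs := by rw [hx]; exact len_t k (-k)
      rcases lt_trichotomy k 0 with hk | rfl | hk
      · -- k < 0 : step by s1 to t (2*(-k), -k) * (s1 * s2)
        have hb : t (2*(-k), -k) * (s1 * s2) = s1 * x * (δ s1)⁻¹ := by
          rw [hx, hd1, s2_inv]
          simp only [mul_assoc, one_mul, mul_one, t_t_x, t_mul, s1_t_x, s1_t',
            s2_t_x, s2_t', s1s1_x, s1_sq, s2s2_x, s2_sq, braid_x, braid']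
          ring_nf
        have hlb := len_t_s1s2 (G := G) (2*(-k)) (-k)
        have hlt : len (t (2*(-k), -k) * (s1 * s2) : G) < len x := by
          rw [hlb, hL]; omega
        exact Relation.ReflTransGen.head ⟨⟨s1, hs1m, hb⟩, hlt⟩
          (ih _ (by rw [← hlen]; exact hlt) _ ⟨-k, Or.inr (Or.inl rfl)⟩ rfl)
      · -- k = 0 : already 1
        have hx1 : x = 1 := by
          rw [hx, show ((0 : ℤ), -(0 : ℤ)) = ((0 : ℤ), (0 : ℤ)) by norm_num, t_zero]
        rw [hx1]
      · -- k > 0 : step by s2 to t (k, 2*k) * (s2 * s1)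
        have hb : t (k, 2*k) * (s2 * s1) = s2 * x * (δ s2)⁻¹ := by
          rw [hx, hd2, s1_inv]
          simp only [mul_assoc, one_mul, mul_one, t_t_x, t_mul, s1_t_x, s1_t',
            s2_t_x, s2_t', s1s1_x, s1_sq, s2s2_x, s2_sq, braid_x, braid']
          ring_nf
        have hlb := len_t_s2s1 (G := G) k (2*k)
        have hlt : len (t (k, 2*k) * (s2 * s1) : G) < len x := by
          rw [hlb, hL]; omega
        exact Relation.ReflTransGen.head ⟨⟨s2, hs2m, hb⟩, hlt⟩
          (ih _ (by rw [← hlen]; exact hlt) _ ⟨k, Or.inl rfl⟩ rfl)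

end Delta

end A2Data
end A2


open A2 A2Data in
/-- The elements of `W_a` that are `δ`-conjugate to the identity are exactly
`{t^{k(α₁+2α₂)}s₂s₁, t^{k(2α₁+α₂)}s₁s₂, t^{k(α₁-α₂)} : k ∈ ℤ}`; in particular every
such element can be reduced to the identity by length-decreasing `δ`-conjugation steps
by simple reflections. -/
theorem statement_6 {G : Type*} [Group G] [A2Data G] (δ : G ≃* G)
    (hδ : IsDiagramAut δ) :
    dConjClass δ (1 : G) ∩ (Wa G : Set G) =
      {x : G | ∃ k : ℤ, x = t (k, 2*k) * (s2 * s1) ∨ x = t (2*k, k) * (s1 * s2) ∨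
        x = t (k, -k)} ∧
    ∀ x ∈ ({x : G | ∃ k : ℤ, x = t (k, 2*k) * (s2 * s1) ∨ x = t (2*k, k) * (s1 * s2) ∨
        x = t (k, -k)} : Set G),
      Relation.ReflTransGen
        (fun a b : G => (∃ s ∈ simples G, b = s * a * (δ s)⁻¹) ∧ len b < len a) x 1 := by
  constructor
  · exact Set.Subset.antisymm (dconj_one_subset δ hδ) (dconj_one_supset δ hδ)
  · rintro x ⟨k, hx⟩
    exact red_to_one δ hδ (len x) x ⟨k, hx⟩ rfl
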